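/- The monomial symmetric function m_λ in at least |λ| variables has saturated Newton polytope if and only if λ = (1^n) for some n. -/

import Mathlib

open MvPolynomial Finset

/-- The Newton polytope of a multivariate polynomial. -/
noncomputable def Newton {n : ℕ} {R : Type*} [CommSemiring R]
    (f : MvPolynomial (Fin n) R) : Set (Fin n → ℝ) :=
  convexHull ℝ ((fun d : Fin n →₀ ℕ => fun i => (d i : ℝ)) '' ↑f.support)

/-- `f` has saturated Newton polytope. -/
def SNP {n : ℕ} {R : Type*} [CommSemiring R] (f : MvPolynomial (Fin n) R) : Prop :=
  ∀ α : Fin n →₀ ℕ, (fun i => (α i : ℝ)) ∈ Newton f → coeff α f ≠ 0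

/-- The monomial symmetric polynomial `m_λ` in `N` variables: the sum of `x^α`
over the distinct rearrangements `α` of `λ`. -/
noncomputable def msymm {N : ℕ} (lam : Fin N → ℕ) : MvPolynomial (Fin N) ℝ :=
  ∑ α ∈ Finset.image
      (fun σ : Equiv.Perm (Fin N) => Finsupp.equivFunOnFinite.symm (lam ∘ σ))
      Finset.univ,
    monomial α 1


lemma lam_zero {N : ℕ} {lam : Fin N → ℕ} (hdec : Antitone lam) (i : Fin N)
    (hi : ∑ j, lam j ≤ i.val) : lam i = 0 := by
  by_contra h
  have h1 : ∀ j ∈ Finset.Iic i, 1 ≤ lam j := fun j hj => by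
    have := hdec (Finset.mem_Iic.mp hj)
    omega
  have h3 := Finset.card_nsmul_le_sum (Finset.Iic i) lam 1 h1
  rw [Fin.card_Iic, smul_eq_mul, mul_one] at h3
  have h2 : ∑ j ∈ Finset.Iic i, lam j ≤ ∑ j, lam j :=
    Finset.sum_le_sum_of_subset (Finset.subset_univ _)
  have h4 : (Finset.Iic i).sum lam = ∑ j ∈ Finset.Iic i, lam j := rfl
  omega

lemma sum_castLE {N : ℕ} {lam : Fin N → ℕ} (hdec : Antitone lam)
    (hkN : ∑ i, lam i ≤ N) :
    ∑ t : Fin (∑ i, lam i), lam (Fin.castLE hkN t) = ∑ i, lam i := by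
  set k := ∑ i, lam i with hk
  set f : ℕ → ℕ := fun m => if h : m < N then lam ⟨m, h⟩ else 0 with hf
  have e1 : ∑ t : Fin k, lam (Fin.castLE hkN t) = ∑ m ∈ Finset.range k, f m := by
    rw [← Fin.sum_univ_eq_sum_range]
    refine Finset.sum_congr rfl fun t _ => ?_
    simp only [hf]
    rw [dif_pos (lt_of_lt_of_le t.isLt hkN)]
    rfl
  have e2 : ∑ i, lam i = ∑ m ∈ Finset.range N, f m := by
    rw [← Fin.sum_univ_eq_sum_range]
    refine Finset.sum_congr rfl fun t _ => ?_
    simp only [hf]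
    rw [dif_pos t.isLt]
  rw [e1, e2]
  refine Finset.sum_subset (Finset.range_subset_range.mpr hkN) fun m hm hm' => ?_
  simp only [Finset.mem_range, not_lt] at hm hm'
  simp only [hf]
  rw [dif_pos hm]
  exact lam_zero hdec _ hm'

lemma coeff_msymm {N : ℕ} (lam : Fin N → ℕ) (β : Fin N →₀ ℕ) :
    coeff β (_root_.msymm lam)
    = if β ∈ Finset.image
      (fun σ : Equiv.Perm (Fin N) => Finsupp.equivFunOnFinite.symm (lam ∘ σ))
      Finset.univ then 1 else 0 := by
  rw [_root_.msymm, MvPolynomial.coeff_sum]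
  simp_rw [MvPolynomial.coeff_monomial]
  rw [Finset.sum_ite_eq']

lemma perm_mem_support {N : ℕ} (lam : Fin N → ℕ) (σ : Equiv.Perm (Fin N)) :
    Finsupp.equivFunOnFinite.symm (lam ∘ σ) ∈ (_root_.msymm lam).support := by
  rw [MvPolynomial.mem_support_iff, coeff_msymm, if_pos]
  · exact one_ne_zero
  · exact Finset.mem_image.mpr ⟨σ, Finset.mem_univ _, rfl⟩

lemma mem_newton {N : ℕ} {lam : Fin N → ℕ} (hdec : Antitone lam)
    (hvars : ∑ i, lam i ≤ N) (hpos : 0 < ∑ i, lam i) :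
    (fun i : Fin N => if i.val < ∑ j, lam j then (1:ℝ) else 0) ∈ Newton (_root_.msymm lam) := by
  set k := ∑ i, lam i with hk
  haveI : NeZero k := ⟨by omega⟩
  set σ : Fin k → Equiv.Perm (Fin N) :=
    fun j => (Equiv.addRight j).viaEmbedding (Fin.castLEEmb hvars) with hσ
  set z : Fin k → (Fin N → ℝ) := fun j i => (lam (σ j i) : ℝ) with hz
  have hσ1 : ∀ (j : Fin k) (t : Fin k), σ j (Fin.castLE hvars t) = Fin.castLE hvars (t + j) := by
    intro j t
    exact (Equiv.addRight j).viaEmbedding_apply (Fin.castLEEmb hvars) t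
  have hσ2 : ∀ (j : Fin k) (i : Fin N), ¬ i.val < k → σ j i = i := by
    intro j i hi
    refine (Equiv.addRight j).viaEmbedding_apply_of_notMem (Fin.castLEEmb hvars) i ?_
    intro hmem
    rw [Fin.coe_castLEEmb, Fin.range_castLE] at hmem
    exact hi hmem
  have hzsum : ∀ i : Fin N, ∑ j : Fin k, z j i = if i.val < k then (k : ℝ) else 0 := by
    intro i
    by_cases hi : i.val < k
    · rw [if_pos hi]
      have : ∀ j : Fin k, z j i = (lam (Fin.castLE hvars ((⟨i.val, hi⟩ : Fin k) + j)) : ℝ) := by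
        intro j
        rw [hz]
        dsimp only
        rw [show (σ j) i = Fin.castLE hvars ((⟨i.val, hi⟩ : Fin k) + j) from hσ1 j ⟨i.val, hi⟩]
      simp_rw [this]
      rw [← Nat.cast_sum]
      norm_cast
      rw [Fintype.sum_equiv (Equiv.addLeft (⟨i.val, hi⟩ : Fin k))
        (fun j => lam (Fin.castLE hvars ((⟨i.val, hi⟩ : Fin k) + j)))
        (fun t => lam (Fin.castLE hvars t)) (fun j => rfl)]
      exact sum_castLE hdec hvars
    · rw [if_neg hi]
      have : ∀ j : Fin k, z j i = 0 := by
        intro j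
        rw [hz]
        dsimp only
        rw [hσ2 j i hi, lam_zero hdec i (by omega)]
        simp
      simp_rw [this]
      simp
  have hcm : (Finset.univ : Finset (Fin k)).centerMass (fun _ => (1:ℝ)) z
      = fun i : Fin N => if i.val < k then (1:ℝ) else 0 := by
    rw [Finset.centerMass]
    funext i
    simp only [Finset.sum_const, Finset.card_univ, Fintype.card_fin, nsmul_eq_mul, mul_one,
      one_smul, Pi.smul_apply, Finset.sum_apply, smul_eq_mul]
    rw [hzsum i]
    by_cases hi : i.val < k
    · rw [if_pos hi, if_pos hi, inv_mul_cancel₀ (by positivity)]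
    · rw [if_neg hi, if_neg hi, mul_zero]
  rw [← hcm, Newton]
  refine Finset.centerMass_mem_convexHull _ (fun _ _ => zero_le_one) ?_ ?_
  · simp only [Finset.sum_const, Finset.card_univ, Fintype.card_fin, nsmul_eq_mul, mul_one]
    positivity
  · intro j _
    refine ⟨Finsupp.equivFunOnFinite.symm (lam ∘ σ j), perm_mem_support lam (σ j), ?_⟩
    funext i
    simp [hz]

/-- `m_λ` in at least `|λ|` variables is SNP iff `λ = (1^k)`, i.e. all parts of
`λ` are at most `1`. -/
theorem stmt13 {N : ℕ} (lam : Fin N → ℕ) (hdec : Antitone lam)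
    (hvars : ∑ i, lam i ≤ N) :
    SNP (msymm lam) ↔ ∀ i, lam i ≤ 1 := by
  set k := ∑ i, lam i with hk
  constructor
  · -- SNP → all parts ≤ 1 : contrapositive
    intro hsnp
    by_contra hnot
    push_neg at hnot
    obtain ⟨i₀, hi₀⟩ := hnot
    have h2 : 2 ≤ lam i₀ := hi₀
    have hpos : 0 < k := by
      have h3 : lam i₀ ≤ ∑ i, lam i :=
        Finset.single_le_sum (fun i _ => Nat.zero_le _) (Finset.mem_univ i₀)
      rw [hk]; omega
    set α : Fin N →₀ ℕ :=
      Finsupp.equivFunOnFinite.symm (fun i : Fin N => if i.val < k then 1 else 0) with hα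
    have hαapp : ∀ i, α i = if i.val < k then 1 else 0 := fun i => rfl
    have hmem : (fun i => (α i : ℝ)) ∈ Newton (msymm lam) := by
      have := mem_newton hdec hvars hpos
      convert this using 1
      funext i
      rw [hαapp i]
      split <;> simp
    have hcoeff : coeff α (msymm lam) = 0 := by
      rw [coeff_msymm, if_neg]
      intro hαmem
      obtain ⟨τ, -, hτ⟩ := Finset.mem_image.mp hαmem
      have hfun : lam ∘ τ = fun i : Fin N => if i.val < k then 1 else 0 := by
        have := congrArg Finsupp.equivFunOnFinite hτ
        simpa [hα] using this
      have := congrFun hfun (τ.symm i₀)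
      simp only [Function.comp_apply, Equiv.apply_symm_apply] at this
      split at this <;> omega
    exact hsnp α hmem hcoeff
  · -- all parts ≤ 1 → SNP
    intro hall α hmem
    -- the Newton polytope is within the slab [0,1]^N ∩ {∑ = k}
    set T : Set (Fin N → ℝ) :=
      {x | (∀ i, 0 ≤ x i ∧ x i ≤ 1) ∧ ∑ i, x i = (k : ℝ)} with hT
    have hTconv : Convex ℝ T := by
      intro x hx y hy a b ha hb hab
      obtain ⟨hx1, hx2⟩ := hx
      obtain ⟨hy1, hy2⟩ := hy
      constructor
      · intro i
        have h1 := (hx1 i).1; have h2 := (hx1 i).2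
        have h3 := (hy1 i).1; have h4 := (hy1 i).2
        constructor
        · have : (a • x + b • y) i = a * x i + b * y i := rfl
          rw [this]; nlinarith
        · have : (a • x + b • y) i = a * x i + b * y i := rfl
          rw [this]; nlinarith
      · have : ∑ i, (a • x + b • y) i = a * ∑ i, x i + b * ∑ i, y i := by
          rw [Finset.mul_sum, Finset.mul_sum, ← Finset.sum_add_distrib]
          exact Finset.sum_congr rfl fun i _ => rfl
        rw [this, hx2, hy2]; ring_nf; nlinarith [hab]
    have hsub : Newton (msymm lam) ⊆ T := by
      rw [Newton]
      refine convexHull_min ?_ hTconv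
      rintro x ⟨β, hβ, rfl⟩
      have hβ' : β ∈ Finset.image
          (fun σ : Equiv.Perm (Fin N) => Finsupp.equivFunOnFinite.symm (lam ∘ σ))
          Finset.univ := by
        by_contra hc
        have := MvPolynomial.mem_support_iff.mp hβ
        rw [coeff_msymm, if_neg hc] at this
        exact this rfl
      obtain ⟨τ, -, rfl⟩ := Finset.mem_image.mp hβ'
      have happ : ∀ i, (Finsupp.equivFunOnFinite.symm (lam ∘ τ) : Fin N →₀ ℕ) i
          = lam (τ i) := fun i => rfl
      constructor
      · intro i
        simp only [happ]
        constructor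
        · positivity
        · exact_mod_cast hall (τ i)
      · simp only [happ]
        rw [← Nat.cast_sum]
        norm_cast
        exact Equiv.sum_comp τ lam
    obtain ⟨hbd, hsum⟩ := hsub hmem
    have hα1 : ∀ i, α i ≤ 1 := by
      intro i
      have h : ((α i : ℕ) : ℝ) ≤ 1 := (hbd i).2
      exact_mod_cast h
    have hαsum : ∑ i, α i = k := by
      have : ((∑ i, α i : ℕ) : ℝ) = (k : ℝ) := by
        rw [Nat.cast_sum]; exact hsum
      exact_mod_cast this
    -- construct a permutation σ with lam ∘ σ = α
    classical
    have hcard : (Finset.univ.filter (fun i => α i = 1)).card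
        = (Finset.univ.filter (fun i => lam i = 1)).card := by
      have e1 : ∑ i, α i = (Finset.univ.filter (fun i => α i = 1)).card := by
        rw [Finset.card_filter]
        refine Finset.sum_congr rfl fun i _ => ?_
        have := hα1 i
        by_cases h : α i = 1
        · rw [if_pos h, h]
        · rw [if_neg h]; omega
      have e2 : ∑ i, lam i = (Finset.univ.filter (fun i => lam i = 1)).card := by
        rw [Finset.card_filter]
        refine Finset.sum_congr rfl fun i _ => ?_
        have := hall i
        by_cases h : lam i = 1
        · rw [if_pos h, h]
        · rw [if_neg h]; omega
      omega
    have hc1 : Fintype.card {x : Fin N // α x = 1} = Fintype.card {x : Fin N // lam x = 1} := by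
      rw [Fintype.card_subtype, Fintype.card_subtype]; exact hcard
    have hc2 : Fintype.card {x : Fin N // ¬ α x = 1}
        = Fintype.card {x : Fin N // ¬ lam x = 1} := by
      rw [Fintype.card_subtype_compl, Fintype.card_subtype_compl, hc1]
    set e := Fintype.equivOfCardEq hc1 with he
    set f := Fintype.equivOfCardEq hc2 with hf
    set σ := Equiv.subtypeCongr e f with hσ
    have hσpos : ∀ x (h : α x = 1), σ x = (e ⟨x, h⟩ : Fin N) := by
      intro x h
      simp [hσ, Equiv.subtypeCongr, h]
    have hσneg : ∀ x (h : ¬ α x = 1), σ x = (f ⟨x, h⟩ : Fin N) := by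
      intro x h
      simp [hσ, Equiv.subtypeCongr, h]
    have hls : lam ∘ σ = ⇑α := by
      funext x
      by_cases h : α x = 1
      · rw [Function.comp_apply, hσpos x h, h]
        exact (e ⟨x, h⟩).2
      · have hα0 : α x = 0 := by have := hα1 x; omega
        rw [Function.comp_apply, hσneg x h, hα0]
        have h1 := (f ⟨x, h⟩).2
        have h2 := hall (f ⟨x, h⟩ : Fin N)
        omega
    have : coeff α (msymm lam) = 1 := by
      rw [coeff_msymm, if_pos]
      refine Finset.mem_image.mpr ⟨σ, Finset.mem_univ _, ?_⟩
      rw [hls]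
      exact Finsupp.equivFunOnFinite.symm_apply_apply α
    rw [this]
    exact one_ne_zero
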